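/- Let f be C² with L-Lipschitz Hessian and suppose the quadratic decrease satisfies Δq := q(0) - q(d) ≥ ‖d‖³/(2βα) with β ≥ 1, α > 0, Δq > 0. Then the ratio ρ = (f(x) - f(x+d))/Δq satisfies ρ ≥ 1 - 2Lβα. -/

import Mathlib

open scoped RealInnerProductSpace
open InnerProductSpace Set

theorem stmt3 (n : ℕ) (f : EuclideanSpace ℝ (Fin n) → ℝ) (L : ℝ) (hL : 0 < L)
    (hf : ContDiff ℝ 2 f)
    (hLip : ∀ y z : EuclideanSpace ℝ (Fin n),
      ‖fderiv ℝ (gradient f) y - fderiv ℝ (gradient f) z‖ ≤ L * ‖y - z‖)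
    (x d : EuclideanSpace ℝ (Fin n)) (β α Δq : ℝ) (hβ : 1 ≤ β) (hα : 0 < α)
    (hΔq : Δq = -(⟪gradient f x, d⟫ + (1/2) * ⟪d, fderiv ℝ (gradient f) x d⟫))
    (hlow : ‖d‖^3 / (2 * β * α) ≤ Δq) (hpos : 0 < Δq) :
    (f x - f (x + d)) / Δq ≥ 1 - 2 * L * β * α := by
  set H : EuclideanSpace ℝ (Fin n) →L[ℝ] EuclideanSpace ℝ (Fin n) :=
    fderiv ℝ (gradient f) x with hH
  have hgradC : ContDiff ℝ 1 (gradient f) := by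
    have : gradient f = fun y => (toDual ℝ (EuclideanSpace ℝ (Fin n))).symm (fderiv ℝ f y) := rfl
    rw [this]
    exact (toDual ℝ _).symm.contDiff.comp (hf.fderiv_right (by norm_num))
  have hgradD : Differentiable ℝ (gradient f) := hgradC.differentiable one_ne_zero
  have hfD : Differentiable ℝ f := hf.differentiable (by norm_num)
  set G : EuclideanSpace ℝ (Fin n) → EuclideanSpace ℝ (Fin n) :=
    fun z => gradient f z - H (z - x) with hG
  have hGd : ∀ z, HasFDerivAt G (fderiv ℝ (gradient f) z - H) z := by
    intro z
    have h1 : HasFDerivAt (fun z => H (z - x)) H z := by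
      simpa [Function.comp_def] using (H.hasFDerivAt.comp z ((hasFDerivAt_id z).sub_const x))
    exact (hgradD z).hasFDerivAt.sub h1
  have hGbound : ∀ t : ℝ, t ∈ Icc (0:ℝ) 1 →
      ‖G (x + t • d) - G x‖ ≤ L * ‖d‖ * ‖t • d‖ := by
    intro t ht
    have hseg : Convex ℝ (segment ℝ x (x + d)) := convex_segment _ _
    have hmem : x + t • d ∈ segment ℝ x (x + d) := by
      refine ⟨1 - t, t, by linarith [ht.2], ht.1, by ring, ?_⟩
      module
    have := hseg.norm_image_sub_le_of_norm_fderiv_le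
      (f := G) (C := L * ‖d‖) (fun z _ => (hGd z).differentiableAt)
      (fun z hz => ?_) (left_mem_segment ℝ x (x + d)) hmem
    · simpa using this
    · rw [(hGd z).fderiv]
      calc ‖fderiv ℝ (gradient f) z - H‖ ≤ L * ‖z - x‖ := hLip z x
        _ ≤ L * ‖d‖ := by
            obtain ⟨a, b, ha, hb, hab, rfl⟩ := hz
            have h2 : a • x + b • (x + d) - x = b • d := by
              have : a = 1 - b := by linarith
              rw [this]; module
            rw [h2, norm_smul]
            have hb1 : b ≤ 1 := by linarith
            have : |b| * ‖d‖ ≤ 1 * ‖d‖ := by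
              gcongr
              rw [abs_of_nonneg hb]; exact hb1
            gcongr
            simpa using this
  -- inner product identity
  have hip : ∀ y d', ⟪gradient f y, d'⟫ = fderiv ℝ f y d' := fun _ _ => toDual_symm_apply
  -- the 1-D function
  set g : ℝ → ℝ := fun t =>
    f (x + t • d) - t * ⟪gradient f x, d⟫ - t^2/2 * ⟪d, H d⟫ with hg
  have hgd : ∀ t : ℝ, HasDerivAt g
      (⟪G (x + t • d) - G x, d⟫) t := by
    intro t
    have hc : HasDerivAt (fun t : ℝ => x + t • d) d t := by
      simpa using ((hasDerivAt_id t).smul_const d).const_add x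
    have h1 : HasDerivAt (fun t : ℝ => f (x + t • d))
        (fderiv ℝ f (x + t • d) d) t :=
      (hfD (x + t • d)).hasFDerivAt.comp_hasDerivAt t hc
    have h2 : HasDerivAt (fun t : ℝ => t * ⟪gradient f x, d⟫)
        (⟪gradient f x, d⟫) t := by
      simpa using (hasDerivAt_id t).mul_const (⟪gradient f x, d⟫)
    have h3 : HasDerivAt (fun t : ℝ => t^2/2 * ⟪d, H d⟫)
        (t * ⟪d, H d⟫) t := by
      have h := ((hasDerivAt_pow 2 t).div_const 2).mul_const (⟪d, H d⟫)
      refine h.congr_deriv ?_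
      norm_num
    have := (h1.sub h2).sub h3
    refine this.congr_deriv ?_
    have e1 : x + t • d - x = t • d := by module
    have hHt : G (x + t • d) - G x = gradient f (x + t • d) - gradient f x - t • H d := by
      simp only [hG, e1, map_smul, sub_self, map_zero]
      module
    rw [hHt, inner_sub_left, inner_sub_left, real_inner_smul_left, hip, hip,
      real_inner_comm d (H d)]
  -- bound on g'
  have hg'bound : ∀ t ∈ Ico (0:ℝ) 1, ‖⟪G (x + t • d) - G x, d⟫‖ ≤ L * ‖d‖^3 := by
    intro t ht
    have ht' : t ∈ Icc (0:ℝ) 1 := ⟨ht.1, le_of_lt ht.2⟩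
    calc ‖⟪G (x + t • d) - G x, d⟫‖ ≤ ‖G (x + t • d) - G x‖ * ‖d‖ := by
          rw [Real.norm_eq_abs]; exact abs_real_inner_le_norm _ _
      _ ≤ (L * ‖d‖ * ‖t • d‖) * ‖d‖ := by gcongr; exact hGbound t ht'
      _ = |t| * (L * ‖d‖^3) := by rw [norm_smul, Real.norm_eq_abs]; ring
      _ ≤ 1 * (L * ‖d‖^3) := by
          have ht1 : |t| ≤ 1 := by rw [abs_of_nonneg ht.1]; linarith [ht.2]
          have : (0:ℝ) ≤ L * ‖d‖^3 := by positivity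
          exact mul_le_mul_of_nonneg_right ht1 this
      _ = L * ‖d‖^3 := one_mul _
  -- mean value
  have hmv := norm_image_sub_le_of_norm_deriv_le_segment'
    (f := g) (f' := fun t => ⟪G (x + t • d) - G x, d⟫) (a := 0) (b := 1)
    (C := L * ‖d‖^3)
    (fun t _ => (hgd t).hasDerivWithinAt) hg'bound 1 (by norm_num)
  simp only [sub_zero, mul_one] at hmv
  have hg1 : g 1 = f (x + d) - ⟪gradient f x, d⟫ - (1/2) * ⟪d, H d⟫ := by
    simp [hg]
  have hg0 : g 0 = f x := by simp [hg]
  rw [hg1, hg0, Real.norm_eq_abs] at hmv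
  have hkey : f x - f (x + d) ≥ Δq - L * ‖d‖^3 := by
    rw [hΔq]
    have h := abs_le.mp hmv
    linarith [h.1, h.2]
  -- arithmetic finish
  have hba : 0 < 2 * β * α := by positivity
  have hcube : ‖d‖^3 ≤ 2 * β * α * Δq := by
    rw [div_le_iff₀ hba] at hlow; linarith
  have hfinal : f x - f (x + d) ≥ (1 - 2 * L * β * α) * Δq := by
    have : L * ‖d‖^3 ≤ L * (2 * β * α * Δq) := by gcongr
    nlinarith
  rw [ge_iff_le, ← sub_nonneg]
  have : (f x - f (x + d)) / Δq - (1 - 2 * L * β * α)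
      = (f x - f (x + d) - (1 - 2 * L * β * α) * Δq) / Δq := by
    field_simp
  rw [this]
  apply div_nonneg _ hpos.le
  linarith
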